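/- arXiv:2206.12302 — 7 statements merged into one kernel-verified Lean document; each statement's English description precedes it below -/
import Mathlib

section
/- Suppose a : primes → ℝ satisfies ∑_{p ≤ x} a(p)² ∼ x/log x and ∑_{p ≤ x} a(p)⁴ ∼ 2x/log x as x → ∞. Then ∑_{x < p ≤ 2x} |a(p)| ≫ x/log x for all sufficiently large x; in particular ∑_{p ≤ x} |a(p)| ≫ x/log x. -/
open Finset Filter Asymptotics Topology

private lemma split_sum (f : ℕ → ℝ) (x : ℕ) :
    ∑ p ∈ (Finset.range (2 * x + 1)).filter Nat.Prime, f p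
      = ∑ p ∈ (Finset.range (x + 1)).filter Nat.Prime, f p
        + ∑ p ∈ (Finset.Ioc x (2 * x)).filter Nat.Prime, f p := by
  have hset : Finset.range (2 * x + 1) = Finset.range (x + 1) ∪ Finset.Ioc x (2 * x) := by
    ext n
    simp only [Finset.mem_range, Finset.mem_union, Finset.mem_Ioc]
    omega
  have hdisj : Disjoint ((Finset.range (x + 1)).filter Nat.Prime)
      ((Finset.Ioc x (2 * x)).filter Nat.Prime) := by
    refine Finset.disjoint_filter_filter ?_
    rw [Finset.disjoint_left]
    intro n hn hn'
    simp only [Finset.mem_range] at hn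
    simp only [Finset.mem_Ioc] at hn'
    omega
  rw [hset, Finset.filter_union, Finset.sum_union hdisj]

private lemma cs1 (a : ℕ → ℝ) (s : Finset ℕ) :
    (∑ p ∈ s, a p ^ 2) ^ 2 ≤ (∑ p ∈ s, |a p|) * (∑ p ∈ s, |a p| ^ 3) := by
  have h := Finset.sum_mul_sq_le_sq_mul_sq s (fun p => Real.sqrt |a p|)
    (fun p => |a p| * Real.sqrt |a p|)
  have e1 : ∀ p : ℕ, Real.sqrt |a p| * (|a p| * Real.sqrt |a p|) = a p ^ 2 := by
    intro p
    rw [show Real.sqrt |a p| * (|a p| * Real.sqrt |a p|)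
        = Real.sqrt |a p| ^ 2 * |a p| by ring, Real.sq_sqrt (abs_nonneg _), ← sq_abs]
    ring
  have e2 : ∀ p : ℕ, Real.sqrt |a p| ^ 2 = |a p| := fun p => Real.sq_sqrt (abs_nonneg _)
  have e3 : ∀ p : ℕ, (|a p| * Real.sqrt |a p|) ^ 2 = |a p| ^ 3 := by
    intro p
    rw [mul_pow, Real.sq_sqrt (abs_nonneg _)]
    ring
  simpa only [e1, e2, e3] using h

private lemma cs2 (a : ℕ → ℝ) (s : Finset ℕ) :
    (∑ p ∈ s, |a p| ^ 3) ^ 2 ≤ (∑ p ∈ s, a p ^ 2) * (∑ p ∈ s, a p ^ 4) := by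
  have h := Finset.sum_mul_sq_le_sq_mul_sq s (fun p => |a p|) (fun p => a p ^ 2)
  have e1 : ∀ p : ℕ, |a p| * a p ^ 2 = |a p| ^ 3 := by
    intro p; rw [← sq_abs]; ring
  have e2 : ∀ p : ℕ, |a p| ^ 2 = a p ^ 2 := fun p => sq_abs _
  have e3 : ∀ p : ℕ, (a p ^ 2) ^ 2 = a p ^ 4 := by intro p; ring
  simpa only [e1, e2, e3] using h

private lemma pointwise (A B C D L : ℝ) (hA : 0 ≤ A) (hC : 0 ≤ C)
    (hL : 0 < L) (hB : 3 / 4 * L ≤ B) (hD : D ≤ 3 * L)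
    (h1 : B ^ 2 ≤ A * C) (h2 : C ^ 2 ≤ B * D) : 1 / 4 * L ≤ A := by
  have hBpos : 0 < B := lt_of_lt_of_le (by nlinarith) hB
  have h4 : B ^ 4 ≤ (A * C) ^ 2 := by
    calc B ^ 4 = (B ^ 2) ^ 2 := by ring
    _ ≤ (A * C) ^ 2 := pow_le_pow_left₀ (sq_nonneg B) h1 2
  have h6 : (A * C) ^ 2 ≤ A ^ 2 * (B * D) := by
    calc (A * C) ^ 2 = A ^ 2 * C ^ 2 := by ring
    _ ≤ A ^ 2 * (B * D) := mul_le_mul_of_nonneg_left h2 (sq_nonneg A)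
  have h7 : B ^ 3 ≤ A ^ 2 * D := by
    have := h4.trans h6
    nlinarith [hBpos]
  have h8 : (3 / 4 * L) ^ 3 ≤ B ^ 3 := pow_le_pow_left₀ (by nlinarith) hB 3
  have h9 : A ^ 2 * D ≤ A ^ 2 * (3 * L) := mul_le_mul_of_nonneg_left hD (sq_nonneg A)
  have h10 : (1 / 4 * L) ^ 2 ≤ A ^ 2 := by nlinarith [h8.trans (h7.trans h9), mul_pos hL hL]
  have := Real.sqrt_le_sqrt h10
  rwa [Real.sqrt_sq (by nlinarith), Real.sqrt_sq hA] at this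

/-- If `∑_{p ≤ x} a(p)² ∼ x/log x` and `∑_{p ≤ x} a(p)⁴ ∼ 2x/log x`,
then `∑_{x < p ≤ 2x} |a(p)| ≫ x/log x`, and in particular `∑_{p ≤ x} |a(p)| ≫ x/log x`. -/
theorem abs_first_moment_lower_bound (a : ℕ → ℝ)
    (h2 : (fun x : ℕ => ∑ p ∈ (Finset.range (x + 1)).filter Nat.Prime, (a p) ^ 2)
        ~[atTop] fun x : ℕ => (x : ℝ) / Real.log x)
    (h4 : (fun x : ℕ => ∑ p ∈ (Finset.range (x + 1)).filter Nat.Prime, (a p) ^ 4)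
        ~[atTop] fun x : ℕ => 2 * (x : ℝ) / Real.log x) :
    (∃ c > 0, ∀ᶠ x : ℕ in atTop,
        c * x / Real.log x ≤ ∑ p ∈ (Finset.Ioc x (2 * x)).filter Nat.Prime, |a p|) ∧
    (∃ c > 0, ∀ᶠ x : ℕ in atTop,
        c * x / Real.log x ≤ ∑ p ∈ (Finset.range (x + 1)).filter Nat.Prime, |a p|) := by
  set L : ℕ → ℝ := fun x => (x : ℝ) / Real.log x with hLdef
  set S2 : ℕ → ℝ := fun x => ∑ p ∈ (Finset.range (x + 1)).filter Nat.Prime, (a p) ^ 2 with hS2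
  set S4 : ℕ → ℝ := fun x => ∑ p ∈ (Finset.range (x + 1)).filter Nat.Prime, (a p) ^ 4 with hS4
  have hLpos : ∀ᶠ x : ℕ in atTop, 0 < L x := by
    filter_upwards [eventually_ge_atTop 2] with x hx
    have h1 : (1 : ℝ) < (x : ℝ) := by exact_mod_cast hx
    exact div_pos (by linarith) (Real.log_pos h1)
  have hLne : ∀ᶠ x : ℕ in atTop, L x ≠ 0 := hLpos.mono fun x h => h.ne'
  have h2Lne : ∀ᶠ x : ℕ in atTop, 2 * (x : ℝ) / Real.log x ≠ 0 := by
    filter_upwards [hLpos] with x h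
    have : 2 * (x : ℝ) / Real.log x = 2 * L x := by rw [hLdef]; ring
    rw [this]
    positivity
  have t2 : Tendsto (fun x => S2 x / L x) atTop (𝓝 1) :=
    (isEquivalent_iff_tendsto_one hLne).mp h2
  have t4 : Tendsto (fun x => S4 x / L x) atTop (𝓝 2) := by
    have t4' : Tendsto (fun x => S4 x / (2 * (x : ℝ) / Real.log x)) atTop (𝓝 1) :=
      (isEquivalent_iff_tendsto_one h2Lne).mp h4
    have := t4'.const_mul (2 : ℝ)
    rw [mul_one] at this
    refine this.congr' ?_
    filter_upwards [hLne] with x h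
    rw [hLdef] at h ⊢
    field_simp
  have hlogT : Tendsto (fun x : ℕ => Real.log x) atTop atTop :=
    Real.tendsto_log_atTop.comp tendsto_natCast_atTop_atTop
  have hr : Tendsto (fun x : ℕ => L (2 * x) / L x) atTop (𝓝 2) := by
    have hg : Tendsto (fun x : ℕ => Real.log 2 / Real.log x) atTop (𝓝 0) :=
      tendsto_const_nhds.div_atTop hlogT
    have h1g : Tendsto (fun x : ℕ => 1 + Real.log 2 / Real.log x) atTop (𝓝 1) := by
      have := (tendsto_const_nhds (x := (1:ℝ)) (f := atTop (α := ℕ))).add hg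
      simpa using this
    have hq : Tendsto (fun x : ℕ => 2 / (1 + Real.log 2 / Real.log x)) atTop (𝓝 2) := by
      have := (tendsto_const_nhds (x := (2:ℝ)) (f := atTop (α := ℕ))).div h1g one_ne_zero
      simpa only [div_one, Pi.div_def] using this
    refine hq.congr' ?_
    filter_upwards [eventually_ge_atTop 2] with x hx
    have hx1 : (1 : ℝ) < (x : ℝ) := by exact_mod_cast hx
    have hx0 : (x : ℝ) ≠ 0 := by positivity
    have hlx : 0 < Real.log x := Real.log_pos hx1
    have hl2 : 0 < Real.log 2 := Real.log_pos one_lt_two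
    have hcast : ((2 * x : ℕ) : ℝ) = 2 * (x : ℝ) := by push_cast; ring
    rw [hLdef]
    simp only [hcast]
    rw [Real.log_mul two_ne_zero hx0]
    have hden : 1 + Real.log 2 / Real.log x ≠ 0 := by positivity
    field_simp
    ring
  have hdouble : Tendsto (fun x : ℕ => 2 * x) atTop atTop :=
    tendsto_atTop_atTop.mpr fun b => ⟨b, fun n hn => by omega⟩
  set D2 : ℕ → ℝ := fun x => ∑ p ∈ (Finset.Ioc x (2 * x)).filter Nat.Prime, (a p) ^ 2 with hD2
  set D4 : ℕ → ℝ := fun x => ∑ p ∈ (Finset.Ioc x (2 * x)).filter Nat.Prime, (a p) ^ 4 with hD4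
  have hD2eq : ∀ x : ℕ, D2 x = S2 (2 * x) - S2 x := by
    intro x
    have := split_sum (fun p => a p ^ 2) x
    rw [hD2, hS2]
    simp only at this ⊢
    linarith [this]
  have hD4eq : ∀ x : ℕ, D4 x = S4 (2 * x) - S4 x := by
    intro x
    have := split_sum (fun p => a p ^ 4) x
    rw [hD4, hS4]
    simp only at this ⊢
    linarith [this]
  have hL2ne : ∀ᶠ x : ℕ in atTop, L (2 * x) ≠ 0 := hdouble.eventually hLne
  have tD2 : Tendsto (fun x => D2 x / L x) atTop (𝓝 1) := by
    have t2' : Tendsto (fun x : ℕ => S2 (2 * x) / L (2 * x)) atTop (𝓝 1) := t2.comp hdouble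
    have hcomb := (t2'.mul hr).sub t2
    have : (1 : ℝ) * 2 - 1 = 1 := by norm_num
    rw [this] at hcomb
    refine hcomb.congr' ?_
    filter_upwards [hLne, hL2ne] with x h h2x
    rw [hD2eq x, sub_div]
    congr 1
    field_simp
  have tD4 : Tendsto (fun x => D4 x / L x) atTop (𝓝 2) := by
    have t4' : Tendsto (fun x : ℕ => S4 (2 * x) / L (2 * x)) atTop (𝓝 2) := t4.comp hdouble
    have hcomb := (t4'.mul hr).sub t4
    have : (2 : ℝ) * 2 - 2 = 2 := by norm_num
    rw [this] at hcomb
    refine hcomb.congr' ?_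
    filter_upwards [hLne, hL2ne] with x h h2x
    rw [hD4eq x, sub_div]
    congr 1
    field_simp
  have hBlow : ∀ᶠ x : ℕ in atTop, 3 / 4 ≤ D2 x / L x :=
    tD2.eventually (eventually_ge_nhds (by norm_num : (3 / 4 : ℝ) < 1))
  have hDup : ∀ᶠ x : ℕ in atTop, D4 x / L x ≤ 3 :=
    tD4.eventually (eventually_le_nhds (by norm_num : (2 : ℝ) < 3))
  have hmain : ∀ᶠ x : ℕ in atTop,
      1 / 4 * x / Real.log x ≤ ∑ p ∈ (Finset.Ioc x (2 * x)).filter Nat.Prime, |a p| := by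
    filter_upwards [hBlow, hDup, hLpos] with x hB hD hL
    have hB' : 3 / 4 * L x ≤ D2 x := (le_div_iff₀ hL).mp hB
    have hD' : D4 x ≤ 3 * L x := (div_le_iff₀ hL).mp hD
    have key := pointwise (∑ p ∈ (Finset.Ioc x (2 * x)).filter Nat.Prime, |a p|)
      (D2 x) (∑ p ∈ (Finset.Ioc x (2 * x)).filter Nat.Prime, |a p| ^ 3) (D4 x) (L x)
      (Finset.sum_nonneg fun p _ => abs_nonneg _)
      (Finset.sum_nonneg fun p _ => by positivity)
      hL hB' hD' (cs1 a _) (cs2 a _)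
    calc 1 / 4 * (x : ℝ) / Real.log x = 1 / 4 * L x := by rw [hLdef]; ring
    _ ≤ _ := key
  refine ⟨⟨1 / 4, by norm_num, hmain⟩, ⟨1 / 12, by norm_num, ?_⟩⟩
  have hhalf : Tendsto (fun x : ℕ => x / 2) atTop atTop :=
    tendsto_atTop_atTop.mpr fun b => ⟨2 * b, fun n hn => by omega⟩
  filter_upwards [hhalf.eventually hmain, eventually_ge_atTop 4] with x hx hx4
  set y := x / 2 with hy
  have hsub : (Finset.Ioc y (2 * y)).filter Nat.Prime ⊆ (Finset.range (x + 1)).filter Nat.Prime := by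
    intro n hn
    simp only [Finset.mem_filter, Finset.mem_Ioc, Finset.mem_range] at hn ⊢
    exact ⟨by omega, hn.2⟩
  have hsum : ∑ p ∈ (Finset.Ioc y (2 * y)).filter Nat.Prime, |a p|
      ≤ ∑ p ∈ (Finset.range (x + 1)).filter Nat.Prime, |a p| :=
    Finset.sum_le_sum_of_subset_of_nonneg hsub fun p _ _ => abs_nonneg _
  have hy2 : 2 ≤ y := by omega
  have hy1 : (1 : ℝ) < (y : ℝ) := by exact_mod_cast (by omega : 1 < y)
  have hlogy : 0 < Real.log y := Real.log_pos hy1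
  have hylex : Real.log y ≤ Real.log x := Real.log_le_log (by positivity)
    (by exact_mod_cast (by omega : y ≤ x))
  have hnum : 1 / 12 * (x : ℝ) ≤ 1 / 4 * (y : ℝ) := by
    have : (x : ℝ) ≤ 3 * (y : ℝ) := by exact_mod_cast (by omega : x ≤ 3 * y)
    linarith
  calc 1 / 12 * (x : ℝ) / Real.log x ≤ 1 / 4 * (y : ℝ) / Real.log y :=
        div_le_div₀ (by positivity) hnum hlogy hylex
  _ ≤ _ := hx.trans hsum
end

section
/- Taking a = 4 in the previous statement: if ∑_{p ≤ x} a(p)² ∼ π(x), then the set of primes p with |a(p)| < 2 has lower natural density at least 3/4. -/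
open Finset Filter Asymptotics

/-- If `∑_{p ≤ x} a(p)² ∼ π(x)` then the set of primes `p` with
`|a(p)| < 2` has lower natural density at least `3/4`. -/
theorem ramanujan_density_three_quarters (a : ℕ → ℝ)
    (h2 : (fun x : ℕ => ∑ p ∈ (Finset.range (x + 1)).filter Nat.Prime, (a p) ^ 2)
        ~[atTop] fun x : ℕ => (((Finset.range (x + 1)).filter Nat.Prime).card : ℝ)) :
    (3 : ℝ) / 4 ≤
      atTop.liminf (fun x : ℕ =>
        (((Finset.range (x + 1)).filter (fun p => p.Prime ∧ |a p| < 2)).card : ℝ) /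
          (((Finset.range (x + 1)).filter Nat.Prime).card : ℝ)) := by
  set P : ℕ → Finset ℕ := fun x => (Finset.range (x + 1)).filter Nat.Prime with hP
  set π : ℕ → ℝ := fun x => ((P x).card : ℝ) with hπ
  set S : ℕ → ℝ := fun x => ∑ p ∈ P x, (a p) ^ 2 with hS
  set g : ℕ → ℝ := fun x =>
    (((Finset.range (x + 1)).filter (fun p => p.Prime ∧ |a p| < 2)).card : ℝ) / π x with hg
  have hπpos : ∀ᶠ x : ℕ in atTop, 0 < π x := by
    filter_upwards [eventually_ge_atTop 2] with x hx
    have h2m : 2 ∈ P x := by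
      simp [hP, Finset.mem_filter, Nat.lt_succ_iff, hx, Nat.prime_two]
    have h0 : 0 < (P x).card := Finset.card_pos.2 ⟨2, h2m⟩
    simp only [hπ]
    exact_mod_cast h0
  have hne : ∀ᶠ x : ℕ in atTop, π x ≠ 0 := hπpos.mono fun x hx => ne_of_gt hx
  have hlim : Tendsto (fun x => S x / π x) atTop (nhds 1) :=
    (isEquivalent_iff_tendsto_one hne).1 h2
  have htend : Tendsto (fun x => 1 - S x / π x / 4) atTop (nhds (3 / 4)) := by
    have := (tendsto_const_nhds (x := (1:ℝ)) (f := atTop (α := ℕ))).sub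
      (hlim.div_const 4)
    norm_num at this ⊢
    exact this
  have hbound : ∀ᶠ x : ℕ in atTop, 1 - S x / π x / 4 ≤ g x := by
    filter_upwards [hπpos] with x hx
    have hsplit : (Finset.range (x + 1)).filter (fun p => p.Prime ∧ |a p| < 2)
        = (P x).filter (fun p => |a p| < 2) := by
      rw [hP, Finset.filter_filter]
    set B : Finset ℕ := (P x).filter (fun p => ¬ |a p| < 2) with hB
    have hcard : ((P x).filter (fun p => |a p| < 2)).card + B.card = (P x).card :=
      Finset.card_filter_add_card_filter_not _
    have hSB : 4 * (B.card : ℝ) ≤ S x := by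
      have h1 : ∑ p ∈ B, (4 : ℝ) ≤ ∑ p ∈ B, (a p) ^ 2 := by
        apply Finset.sum_le_sum
        intro p hp
        have : (2 : ℝ) ≤ |a p| := le_of_not_gt (Finset.mem_filter.1 hp).2
        calc (4 : ℝ) = 2 ^ 2 := by norm_num
          _ ≤ |a p| ^ 2 := by nlinarith
          _ = (a p) ^ 2 := sq_abs _
      have h2' : ∑ p ∈ B, (a p) ^ 2 ≤ S x := by
        apply Finset.sum_le_sum_of_subset_of_nonneg (Finset.filter_subset _ _)
        intro p _ _
        positivity
      simp only [Finset.sum_const, nsmul_eq_mul] at h1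
      linarith [h1, h2']
    have hgood : π x - (B.card : ℝ) ≤ (((Finset.range (x + 1)).filter
        (fun p => p.Prime ∧ |a p| < 2)).card : ℝ) := by
      rw [hsplit]
      have : ((P x).filter (fun p => |a p| < 2)).card = (P x).card - B.card := by
        omega
      rw [this]
      have hle : B.card ≤ (P x).card := by omega
      push_cast [hle]
      simp [hπ]
    show 1 - S x / π x / 4 ≤ _ / π x
    rw [le_div_iff₀ hx]
    calc (1 - S x / π x / 4) * π x = π x - S x / 4 := by field_simp
      _ ≤ π x - (B.card : ℝ) := by linarith
      _ ≤ _ := hgood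
  have hbdd : IsBoundedUnder (· ≥ ·) atTop (fun x => 1 - S x / π x / 4) :=
    htend.isBoundedUnder_ge
  have hcobdd : IsCoboundedUnder (· ≥ ·) atTop g := by
    apply isCoboundedUnder_ge_of_eventually_le atTop (x := 1)
    filter_upwards [hπpos] with x hx
    rw [hg, div_le_one hx]
    have hsub : (Finset.range (x + 1)).filter (fun p => p.Prime ∧ |a p| < 2) ⊆ P x :=
      Finset.filter_subset_filter _ (by intro p hp; exact hp) |>.trans
        (by rw [hP]; intro p hp; simpa using (Finset.mem_filter.1 hp).imp id And.left)
    simp only [hπ]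
    exact_mod_cast Finset.card_le_card hsub
  calc (3 : ℝ) / 4 = atTop.liminf (fun x => 1 - S x / π x / 4) := htend.liminf_eq.symm
    _ ≤ atTop.liminf g := liminf_le_liminf hbound hbdd hcobdd
end

section
/- Suppose a : primes → ℝ satisfies |a(p)| ≤ 2 for all p, ∑_{p ≤ x} a(p)⁴ ∼ 2π(x), and ∑_{p ≤ x} a(p)⁶ ∼ 5π(x). Then liminf_{x→∞} #{p ≤ x : a(p)² > 2}/π(x) ≥ 1/32. -/
open Finset Filter Asymptotics

/-- If `|a(p)| ≤ 2` for all primes `p`, `∑_{p ≤ x} a(p)⁴ ∼ 2π(x)` and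
`∑_{p ≤ x} a(p)⁶ ∼ 5π(x)`, then `liminf #{p ≤ x : a(p)² > 2}/π(x) ≥ 1/32`. -/
theorem large_values_density_sqrt_two (a : ℕ → ℝ)
    (hbd : ∀ p : ℕ, p.Prime → |a p| ≤ 2)
    (h4 : (fun x : ℕ => ∑ p ∈ (Finset.range (x + 1)).filter Nat.Prime, (a p) ^ 4)
        ~[atTop] fun x : ℕ => 2 * (((Finset.range (x + 1)).filter Nat.Prime).card : ℝ))
    (h6 : (fun x : ℕ => ∑ p ∈ (Finset.range (x + 1)).filter Nat.Prime, (a p) ^ 6)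
        ~[atTop] fun x : ℕ => 5 * (((Finset.range (x + 1)).filter Nat.Prime).card : ℝ)) :
    (1 : ℝ) / 32 ≤
      atTop.liminf (fun x : ℕ =>
        (((Finset.range (x + 1)).filter (fun p => p.Prime ∧ 2 < (a p) ^ 2)).card : ℝ) /
          (((Finset.range (x + 1)).filter Nat.Prime).card : ℝ)) := by
  classical
  set π : ℕ → ℝ := fun x => (((Finset.range (x + 1)).filter Nat.Prime).card : ℝ) with hπdef
  set S4 : ℕ → ℝ := fun x => ∑ p ∈ (Finset.range (x + 1)).filter Nat.Prime, (a p) ^ 4 with hS4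
  set S6 : ℕ → ℝ := fun x => ∑ p ∈ (Finset.range (x + 1)).filter Nat.Prime, (a p) ^ 6 with hS6
  set N : ℕ → ℝ := fun x =>
    (((Finset.range (x + 1)).filter (fun p => p.Prime ∧ 2 < (a p) ^ 2)).card : ℝ) with hN
  -- π is eventually positive
  have hπpos : ∀ x : ℕ, 2 ≤ x → 0 < π x := by
    intro x hx
    have h2 : 2 ∈ (Finset.range (x + 1)).filter Nat.Prime := by
      simp [Finset.mem_filter, Finset.mem_range, Nat.prime_two]
      omega
    have : 0 < ((Finset.range (x + 1)).filter Nat.Prime).card := Finset.card_pos.2 ⟨2, h2⟩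
    simp only [hπdef]
    exact_mod_cast this
  have hπne : ∀ᶠ x : ℕ in atTop, π x ≠ 0 :=
    eventually_atTop.2 ⟨2, fun x hx => (hπpos x hx).ne'⟩
  -- pointwise key inequality : S6 x - 2 * S4 x ≤ 32 * N x
  have key : ∀ x : ℕ, S6 x - 2 * S4 x ≤ 32 * N x := by
    intro x
    have hsplit : S6 x - 2 * S4 x =
        ∑ p ∈ (Finset.range (x + 1)).filter Nat.Prime, ((a p) ^ 6 - 2 * (a p) ^ 4) := by
      rw [Finset.sum_sub_distrib, ← Finset.mul_sum]
    rw [hsplit]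
    set P := (Finset.range (x + 1)).filter Nat.Prime with hP
    have hPsplit :
        ∑ p ∈ P, ((a p) ^ 6 - 2 * (a p) ^ 4) =
          (∑ p ∈ P.filter (fun p => 2 < (a p) ^ 2), ((a p) ^ 6 - 2 * (a p) ^ 4)) +
          ∑ p ∈ P.filter (fun p => ¬ 2 < (a p) ^ 2), ((a p) ^ 6 - 2 * (a p) ^ 4) :=
      (Finset.sum_filter_add_sum_filter_not _ _ _).symm
    have hbig : ∀ p ∈ P.filter (fun p => 2 < (a p) ^ 2),
        (a p) ^ 6 - 2 * (a p) ^ 4 ≤ 32 := by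
      intro p hp
      simp only [Finset.mem_filter, hP, Finset.mem_range] at hp
      have hb := hbd p hp.1.2
      have h2 : a p ^ 2 ≤ 4 := by
        have := abs_le.1 hb
        nlinarith [this.1, this.2]
      nlinarith [sq_nonneg (a p ^ 2), sq_nonneg (a p), sq_nonneg (a p ^ 2 - 2)]
    have hsmall : ∀ p ∈ P.filter (fun p => ¬ 2 < (a p) ^ 2),
        (a p) ^ 6 - 2 * (a p) ^ 4 ≤ 0 := by
      intro p hp
      simp only [Finset.mem_filter, not_lt] at hp
      have h2 : a p ^ 2 ≤ 2 := hp.2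
      nlinarith [sq_nonneg (a p ^ 2), sq_nonneg (a p)]
    have hcard : (P.filter (fun p => 2 < (a p) ^ 2)).card =
        ((Finset.range (x + 1)).filter (fun p => p.Prime ∧ 2 < (a p) ^ 2)).card := by
      rw [hP, Finset.filter_filter]
    calc ∑ p ∈ P, ((a p) ^ 6 - 2 * (a p) ^ 4)
        = _ + _ := hPsplit
      _ ≤ (P.filter (fun p => 2 < (a p) ^ 2)).card • (32 : ℝ) + 0 := by
          gcongr
          · exact Finset.sum_le_card_nsmul _ _ _ hbig
          · exact Finset.sum_nonpos hsmall
      _ ≤ 32 * N x := by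
          rw [nsmul_eq_mul, hcard, add_zero, hN, mul_comm]
  -- ratios tend to their limits
  have t4 : Tendsto (fun x => S4 x / π x) atTop (nhds 2) := by
    have h1 : Tendsto (fun x => S4 x / (2 * π x)) atTop (nhds 1) := by
      refine (isEquivalent_iff_tendsto_one ?_).1 h4
      filter_upwards [hπne] with x hx
      simpa using hx
    have h2 : Tendsto (fun x => 2 * (S4 x / (2 * π x))) atTop (nhds (2 * 1)) :=
      h1.const_mul 2
    have heq : (fun x => 2 * (S4 x / (2 * π x))) = fun x => S4 x / π x := by
      funext x
      rw [mul_div_assoc', mul_div_mul_left _ _ (two_ne_zero)]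
    rw [heq] at h2
    simpa using h2
  have t6 : Tendsto (fun x => S6 x / π x) atTop (nhds 5) := by
    have h1 : Tendsto (fun x => S6 x / (5 * π x)) atTop (nhds 1) := by
      refine (isEquivalent_iff_tendsto_one ?_).1 h6
      filter_upwards [hπne] with x hx
      simpa using hx
    have h2 : Tendsto (fun x => 5 * (S6 x / (5 * π x))) atTop (nhds (5 * 1)) :=
      h1.const_mul 5
    have heq : (fun x => 5 * (S6 x / (5 * π x))) = fun x => S6 x / π x := by
      funext x
      rw [mul_div_assoc', mul_div_mul_left _ _ (by norm_num : (5 : ℝ) ≠ 0)]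
    rw [heq] at h2
    simpa using h2
  -- the auxiliary function g
  set g : ℕ → ℝ := fun x => (S6 x - 2 * S4 x) / π x / 32 with hg
  have tg : Tendsto g atTop (nhds (1 / 32)) := by
    have tnum : Tendsto (fun x => (S6 x - 2 * S4 x) / π x) atTop (nhds 1) := by
      have heq : (fun x => (S6 x - 2 * S4 x) / π x) =
          fun x => S6 x / π x - 2 * (S4 x / π x) := by
        funext x
        rw [sub_div, mul_div_assoc]
      rw [heq]
      have := t6.sub (t4.const_mul 2)
      norm_num at this
      exact this
    simpa using tnum.div_const 32
  -- g ≤ N/π pointwise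
  have hle : ∀ x : ℕ, g x ≤ N x / π x := by
    intro x
    have hπnn : 0 ≤ π x := by positivity
    rcases hπnn.eq_or_lt with h0 | hpos
    · simp [hg, ← h0]
    · have h1 : (S6 x - 2 * S4 x) / π x ≤ (32 * N x) / π x :=
        (div_le_div_iff_of_pos_right hpos).2 (key x)
      have h2 : (32 * N x) / π x = 32 * (N x / π x) := mul_div_assoc _ _ _
      rw [hg]
      rw [div_le_iff₀ (by norm_num : (0:ℝ) < 32)] at *
      calc (S6 x - 2 * S4 x) / π x ≤ 32 * (N x / π x) := by rw [← h2]; exact h1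
        _ = N x / π x * 32 := by ring
  -- conclude via liminf
  have hNnn : ∀ x : ℕ, (0 : ℝ) ≤ N x / π x := by
    intro x
    have : (0 : ℝ) ≤ N x := by positivity
    have hπnn : 0 ≤ π x := by positivity
    exact div_nonneg this hπnn
  have hliminf_g : atTop.liminf g = 1 / 32 := tg.liminf_eq
  have hb1 : IsBoundedUnder (· ≥ ·) atTop g := tg.isBoundedUnder_ge
  have hub : ∀ x : ℕ, N x / π x ≤ 1 := by
    intro x
    have hπnn : 0 ≤ π x := by positivity
    rcases hπnn.eq_or_lt with h0 | hpos
    · simp [← h0]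
    · rw [div_le_one hpos]
      have : ((Finset.range (x + 1)).filter (fun p => p.Prime ∧ 2 < (a p) ^ 2)).card ≤
          ((Finset.range (x + 1)).filter Nat.Prime).card := by
        apply Finset.card_le_card
        intro p hp
        simp only [Finset.mem_filter] at hp ⊢
        exact ⟨hp.1, hp.2.1⟩
      simp only [hN, hπdef]
      exact_mod_cast this
  have hb2 : IsCoboundedUnder (· ≥ ·) atTop (fun x => N x / π x) :=
    (isBoundedUnder_of ⟨1, fun x => hub x⟩ : IsBoundedUnder (· ≤ ·) atTop
      (fun x => N x / π x)).isCoboundedUnder_ge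
  calc (1 : ℝ) / 32 = atTop.liminf g := hliminf_g.symm
    _ ≤ atTop.liminf (fun x => N x / π x) :=
        liminf_le_liminf (Eventually.of_forall hle) hb1 hb2
end

section
/- Suppose a : primes → ℝ satisfies ∑_{p ≤ x} a(p)⁴ ∼ 2π(x) and ∑_{p ≤ x} a(p)⁶ ∼ 5π(x). Then for every sufficiently large x there exists a prime p ∈ (x, 2x] with a(p)² > 2. In particular there are infinitely many primes p with |a(p)| > √2. -/
open Finset Filter Asymptotics

namespace IMLV

/-- number of primes ≤ x -/
def pc (x : ℕ) : ℕ := ((Finset.range (x+1)).filter Nat.Prime).card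

/-- number of primes in (n, 2n] -/
def kp (n : ℕ) : ℕ := ((Finset.Ioc n (2*n)).filter Nat.Prime).card



lemma centralBinom_le (n : ℕ) (n_large : 2 < n) :
    Nat.centralBinom n ≤ (2*n) ^ Nat.sqrt (2*n) * 4 ^ (2*n/3) * (2*n) ^ kp n := by
  have n_pos : 0 < n := (Nat.zero_le _).trans_lt n_large
  have n2_pos : 1 ≤ 2 * n := mul_pos (zero_lt_two' ℕ) n_pos
  -- split the factorization product
  have key : Nat.centralBinom n =
      (∏ p ∈ Finset.range (2*n/3+1), p ^ n.centralBinom.factorization p) *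
        ∏ p ∈ (Finset.Ioc n (2*n)).filter Nat.Prime, p ^ n.centralBinom.factorization p := by
    conv_lhs => rw [← n.prod_pow_factorization_centralBinom]
    have hsplit : Finset.range (2*n+1) =
        Finset.range (2*n/3+1) ∪ Finset.Ico (2*n/3+1) (2*n+1) := by
      ext x
      simp only [Finset.mem_union, Finset.mem_Ico, Finset.mem_range]
      omega
    have hd : Disjoint (Finset.range (2*n/3+1)) (Finset.Ico (2*n/3+1) (2*n+1)) := by
      rw [Finset.range_eq_Ico]
      exact Finset.Ico_disjoint_Ico_consecutive _ _ _
    rw [hsplit, Finset.prod_union (f := fun p => p ^ n.centralBinom.factorization p) hd]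
    congr 1
    -- restrict the second product to primes in (n, 2n]
    refine (Finset.prod_subset ?_ ?_).symm
    · intro p hp
      simp only [Finset.mem_filter, Finset.mem_Ioc] at hp
      simp only [Finset.mem_Ico]
      omega
    · intro p hp hnp
      simp only [Finset.mem_Ico] at hp
      simp only [Finset.mem_filter, Finset.mem_Ioc, not_and, not_le] at hnp
      by_cases hpp : p.Prime
      · have hple : p ≤ n := by
          by_contra hc
          exact hnp ⟨by omega, by omega⟩ hpp
        have h3p : 2 * n < 3 * p := by omega
        rw [Nat.factorization_centralBinom_of_two_mul_self_lt_three_mul n_large hple h3p,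
          pow_zero]
      · rw [Nat.factorization_eq_zero_of_not_prime _ hpp, pow_zero]
  rw [key]
  have h2 : ∏ p ∈ (Finset.Ioc n (2*n)).filter Nat.Prime, p ^ n.centralBinom.factorization p ≤ (2*n) ^ kp n := by
    apply Finset.prod_le_pow_card
    intro p _
    exact Nat.pow_factorization_choose_le (by positivity)
  refine Nat.mul_le_mul ?_ h2
  -- the small-prime part: same as in Mathlib's Bertrand proof
  let S := (Finset.range (2 * n / 3 + 1)).filter Nat.Prime
  have hSe : ∏ x ∈ S, x ^ n.centralBinom.factorization x = ∏ x ∈ Finset.range (2 * n / 3 + 1), x ^ n.centralBinom.factorization x := by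
    refine Finset.prod_filter_of_ne fun p _ h => ?_
    contrapose! h
    rw [Nat.factorization_eq_zero_of_not_prime _ h, pow_zero]
  rw [← hSe, ← Finset.prod_filter_mul_prod_filter_not S (· ≤ Nat.sqrt (2 * n))]
  apply Nat.mul_le_mul
  · refine (Finset.prod_le_prod' fun p _ => (?_ : p ^ n.centralBinom.factorization p ≤ 2 * n)).trans ?_
    · exact Nat.pow_factorization_choose_le (by positivity)
    have hcard : (Finset.Icc 1 (Nat.sqrt (2 * n))).card = Nat.sqrt (2 * n) := by
      rw [Nat.card_Icc, Nat.add_sub_cancel]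
    rw [Finset.prod_const]
    refine pow_right_mono₀ n2_pos ((Finset.card_le_card fun x hx => ?_).trans hcard.le)
    obtain ⟨h1, h2⟩ := Finset.mem_filter.1 hx
    exact Finset.mem_Icc.mpr ⟨(Finset.mem_filter.1 h1).2.one_lt.le, h2⟩
  · refine le_trans ?_ (primorial_le_4_pow (2 * n / 3))
    refine (Finset.prod_le_prod' fun p hp => (?_ : p ^ n.centralBinom.factorization p ≤ p)).trans ?_
    · obtain ⟨h1, h2⟩ := Finset.mem_filter.1 hp
      refine (pow_right_mono₀ (Finset.mem_filter.1 h1).2.one_lt.le ?_).trans (pow_one p).le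
      exact Nat.factorization_choose_le_one (Nat.sqrt_lt'.mp <| not_le.1 h2)
    refine Finset.prod_le_prod_of_subset_of_one_le' (Finset.filter_subset _ _) ?_
    exact fun p hp _ => (Finset.mem_filter.1 hp).2.one_lt.le




-- smallness lemmas
lemma sqrt_log_littleO :
    (fun x : ℝ => Real.sqrt x * Real.log x) =o[atTop] (fun x : ℝ => x) := by
  have h1 : Real.log =o[atTop] fun x : ℝ => x ^ (1/2 : ℝ) :=
    isLittleO_log_rpow_atTop (by norm_num)
  have h2 : (fun x : ℝ => Real.sqrt x * Real.log x)
      =o[atTop] fun x : ℝ => Real.sqrt x * x ^ (1/2 : ℝ) :=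
    (isBigO_refl (fun x : ℝ => Real.sqrt x) atTop).mul_isLittleO h1
  refine h2.trans_isBigO (IsBigO.of_bound 1 ?_)
  filter_upwards [eventually_ge_atTop (0:ℝ)] with x hx
  rw [← Real.sqrt_eq_rpow, Real.mul_self_sqrt hx]
  simp [abs_of_nonneg hx]

lemma small2 : (fun n : ℕ => Real.sqrt (2*n) * Real.log (2*n))
    =o[atTop] (fun n : ℕ => (n:ℝ)) := by
  have ht : Tendsto (fun n : ℕ => (2*n : ℝ)) atTop atTop := by
    apply Tendsto.const_mul_atTop (by norm_num)
    exact tendsto_natCast_atTop_atTop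
  have := (sqrt_log_littleO.comp_tendsto ht)
  exact this.trans_isBigO (isBigO_const_mul_self (2:ℝ) (fun n : ℕ => (n:ℝ)) atTop)

lemma small1 : (fun n : ℕ => Real.log n) =o[atTop] (fun n : ℕ => (n:ℝ)) :=
  Real.isLittleO_log_id_atTop.comp_tendsto tendsto_natCast_atTop_atTop

lemma small3 : (fun n : ℕ => Real.log (2*n)) =o[atTop] (fun n : ℕ => (n:ℝ)) := by
  have ht : Tendsto (fun n : ℕ => (2*n : ℝ)) atTop atTop := by
    apply Tendsto.const_mul_atTop (by norm_num)
    exact tendsto_natCast_atTop_atTop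
  have := Real.isLittleO_log_id_atTop.comp_tendsto ht
  exact this.trans_isBigO (isBigO_const_mul_self (2:ℝ) (fun n : ℕ => (n:ℝ)) atTop)





lemma range_split' (a b : ℕ) (h : a ≤ b) :
    (Finset.range (b+1)).filter Nat.Prime =
      ((Finset.range (a+1)).filter Nat.Prime) ∪ ((Finset.Ioc a b).filter Nat.Prime) := by
  rw [← Finset.filter_union]
  congr 1
  ext x
  simp only [Finset.mem_range, Finset.mem_union, Finset.mem_Ioc]
  omega

lemma disj' (a b : ℕ) :
    Disjoint ((Finset.range (a+1)).filter Nat.Prime) ((Finset.Ioc a b).filter Nat.Prime) := by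
  apply Finset.disjoint_filter_filter
  rw [Finset.disjoint_left]
  intro x hx hy
  simp only [Finset.mem_range] at hx
  simp only [Finset.mem_Ioc] at hy
  omega

/-- lower bound in log form -/
lemma log_lower (n : ℕ) (hn : 512 ≤ n) :
    (n:ℝ) * Real.log 4 ≤ Real.log n + Real.sqrt (2*n) * Real.log (2*n)
      + ((2*n : ℝ)/3) * Real.log 4 + (kp n) * Real.log (2*n) := by
  have hnat : 4^n < n * ((2*n) ^ Nat.sqrt (2*n) * 4 ^ (2*n/3) * (2*n) ^ kp n) :=
    (Nat.four_pow_lt_mul_centralBinom n (by omega)).trans_le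
      (Nat.mul_le_mul_left n (centralBinom_le n (by omega)))
  have h1 : (4:ℝ)^n ≤ (n:ℝ) * ((2*(n:ℝ)) ^ Nat.sqrt (2*n) * 4 ^ (2*n/3) * (2*(n:ℝ)) ^ kp n) := by
    exact_mod_cast hnat.le
  have hn0 : (0:ℝ) < n := by positivity
  have hn' : (512:ℝ) ≤ (n:ℝ) := by exact_mod_cast hn
  have h2n1 : (1:ℝ) ≤ 2*(n:ℝ) := by linarith
  have hlog := Real.log_le_log (by positivity) h1
  rw [Real.log_pow, Real.log_mul (by positivity) (by positivity),
    Real.log_mul (by positivity) (by positivity),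
    Real.log_mul (by positivity) (by positivity),
    Real.log_pow, Real.log_pow, Real.log_pow] at hlog
  have hL : (0:ℝ) ≤ Real.log (2*(n:ℝ)) := Real.log_nonneg h2n1
  have h4 : (0:ℝ) ≤ Real.log 4 := Real.log_nonneg (by norm_num)
  have hs : (Nat.sqrt (2*n) : ℝ) * Real.log (2*(n:ℝ)) ≤ Real.sqrt (2*n) * Real.log (2*n) := by
    apply mul_le_mul_of_nonneg_right _ hL
    have := Real.nat_sqrt_le_real_sqrt (a := 2*n)
    push_cast at this ⊢
    exact this
  have hq : ((2*n/3 : ℕ) : ℝ) * Real.log 4 ≤ ((2*n:ℝ)/3) * Real.log 4 := by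
    apply mul_le_mul_of_nonneg_right _ h4
    have := Nat.cast_div_le (m := 2*n) (n := 3) (α := ℝ)
    push_cast at this ⊢
    linarith
  push_cast at hlog hs hq ⊢
  linarith

/-- upper bound in log form : pc m ≤ sqrt m + 1 + c with c * (log m / 2) ≤ m log 4 -/
lemma log_upper (m : ℕ) (hm : 2 ≤ m) :
    ∃ c : ℕ, pc m ≤ Nat.sqrt m + 1 + c ∧
      (c:ℝ) * (Real.log m / 2) ≤ (m:ℝ) * Real.log 4 := by
  set s := Nat.sqrt m with hs
  set T := (Finset.Ioc s m).filter Nat.Prime with hT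
  refine ⟨T.card, ?_, ?_⟩
  · have hsm : s ≤ m := Nat.sqrt_le_self m
    have := range_split' s m hsm
    unfold pc
    rw [this, Finset.card_union_of_disjoint (disj' s m)]
    have : ((Finset.range (s+1)).filter Nat.Prime).card ≤ s + 1 :=
      (Finset.card_filter_le _ _).trans (by simp)
    have hd : ((Finset.Ioc s m).filter Nat.Prime).card = T.card := rfl
    omega
  · -- (s+1)^card T ≤ 4^m
    have hprod : (s+1) ^ T.card ≤ 4 ^ m := by
      calc (s+1) ^ T.card ≤ ∏ p ∈ T, p := by
            apply Finset.pow_card_le_prod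
            intro p hp
            simp only [hT, Finset.mem_filter, Finset.mem_Ioc] at hp
            omega
        _ ≤ ∏ p ∈ (Finset.range (m+1)).filter Nat.Prime, p := by
            apply Finset.prod_le_prod_of_subset_of_one_le'
            · intro p hp
              simp only [hT, Finset.mem_filter, Finset.mem_Ioc, Finset.mem_range] at hp ⊢
              exact ⟨by omega, hp.2⟩
            · intro p hp _
              exact ((Finset.mem_filter.1 hp).2).one_lt.le
        _ ≤ 4 ^ m := primorial_le_4_pow m
    have hcast : ((s:ℝ)+1) ^ T.card ≤ (4:ℝ) ^ m := by exact_mod_cast hprod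
    have hlog := Real.log_le_log (by positivity) hcast
    rw [Real.log_pow, Real.log_pow] at hlog
    have hhalf : Real.log m / 2 ≤ Real.log ((s:ℝ)+1) := by
      have hlt : (m:ℝ) ≤ ((s:ℝ)+1)^2 := by
        have := Nat.lt_succ_sqrt m
        have : (m:ℝ) < ((s+1 : ℕ) : ℝ) * ((s+1 : ℕ) : ℝ) := by exact_mod_cast this
        push_cast at this
        nlinarith
      have := Real.log_le_log (by positivity) hlt
      rw [Real.log_pow] at this
      push_cast at this
      linarith
    calc (T.card : ℝ) * (Real.log m / 2) ≤ (T.card : ℝ) * Real.log ((s:ℝ)+1) := by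
          apply mul_le_mul_of_nonneg_left hhalf (by positivity)
      _ ≤ (m:ℝ) * Real.log 4 := by exact_mod_cast hlog




lemma cheb : ∀ᶠ n : ℕ in atTop, (pc (2*n) : ℝ) ≤ 20 * kp n := by
  have h4pos : (0:ℝ) < Real.log 4 := Real.log_pos (by norm_num)
  have hc0pos : (0:ℝ) < Real.log 4 / 30 := by positivity
  filter_upwards [eventually_ge_atTop 512, small1.bound hc0pos, small2.bound hc0pos,
    small3.bound hc0pos] with n h512 hb1 hb2 hb3
  have hn0 : (0:ℝ) < n := by
    have : 0 < n := by omega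
    exact_mod_cast this
  rw [Real.norm_eq_abs, Real.norm_natCast] at hb1 hb2 hb3
  have e1 : Real.log n ≤ Real.log 4 / 30 * n := (le_abs_self _).trans hb1
  have e2 : Real.sqrt (2*n) * Real.log (2*n) ≤ Real.log 4 / 30 * n :=
    (le_abs_self _).trans hb2
  have e3 : Real.log (2*n) ≤ Real.log 4 / 30 * n := (le_abs_self _).trans hb3
  have hlow := log_lower n h512
  -- so (kp n) * log (2n) ≥ (4/15) * log 4 * n
  have hklow : (4/15) * Real.log 4 * n ≤ (kp n : ℝ) * Real.log (2*n) := by linarith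
  obtain ⟨c, hcu, hcl⟩ := log_upper (2*n) (by omega)
  have hL : (0:ℝ) < Real.log (2*n) := by
    apply Real.log_pos
    have : (1:ℕ) < 2*n := by omega
    exact_mod_cast this
  -- upper: pc (2n) * L ≤ (61/15) * log 4 * n
  have hsq : (Nat.sqrt (2*n) : ℝ) ≤ Real.sqrt (2*n) := by
    have := Real.nat_sqrt_le_real_sqrt (a := 2*n)
    push_cast at this ⊢
    exact this
  have hcu' : (pc (2*n) : ℝ) ≤ (Nat.sqrt (2*n) : ℝ) + 1 + c := by exact_mod_cast hcu
  have hcl' : (c:ℝ) * Real.log (2*n) ≤ 4 * Real.log 4 * n := by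
    push_cast at hcl
    linarith
  have hup : (pc (2*n) : ℝ) * Real.log (2*n) ≤ (61/15) * Real.log 4 * n := by
    have h1 : (pc (2*n) : ℝ) * Real.log (2*n)
        ≤ ((Nat.sqrt (2*n) : ℝ) + 1 + c) * Real.log (2*n) :=
      mul_le_mul_of_nonneg_right hcu' hL.le
    have h2 : ((Nat.sqrt (2*n) : ℝ)) * Real.log (2*n)
        ≤ Real.sqrt (2*n) * Real.log (2*n) := mul_le_mul_of_nonneg_right hsq hL.le
    nlinarith [e2, e3, hcl']
  -- combine
  have key : (pc (2*n) : ℝ) * ((4/15) * Real.log 4 * n)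
      ≤ (kp n : ℝ) * ((61/15) * Real.log 4 * n) := by
    calc (pc (2*n) : ℝ) * ((4/15) * Real.log 4 * n)
        ≤ (pc (2*n) : ℝ) * ((kp n : ℝ) * Real.log (2*n)) :=
          mul_le_mul_of_nonneg_left hklow (by positivity)
      _ = (kp n : ℝ) * ((pc (2*n) : ℝ) * Real.log (2*n)) := by ring
      _ ≤ (kp n : ℝ) * ((61/15) * Real.log 4 * n) :=
          mul_le_mul_of_nonneg_left hup (by positivity)
  nlinarith [mul_pos h4pos hn0, key]


lemma sum_split (n : ℕ) (f : ℕ → ℝ) :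
    ∑ p ∈ (Finset.range (2*n+1)).filter Nat.Prime, f p
      = (∑ p ∈ (Finset.range (n+1)).filter Nat.Prime, f p)
        + ∑ p ∈ (Finset.Ioc n (2*n)).filter Nat.Prime, f p := by
  rw [range_split' n (2*n) (by omega), Finset.sum_union (disj' n (2*n))]

lemma pc_split (n : ℕ) : pc (2*n) = pc n + kp n := by
  unfold pc kp
  rw [range_split' n (2*n) (by omega), Finset.card_union_of_disjoint (disj' n (2*n))]

lemma pc_mono : Monotone pc := fun x y hxy => by
  unfold pc
  apply Finset.card_le_card
  apply Finset.filter_subset_filter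
  exact Finset.range_subset_range.2 (by omega)

end IMLV

open IMLV

/-- If `∑_{p ≤ x} a(p)⁴ ∼ 2π(x)` and `∑_{p ≤ x} a(p)⁶ ∼ 5π(x)`, then for every
sufficiently large `x` there is a prime `p ∈ (x, 2x]` with `a(p)² > 2`; in particular there are
infinitely many primes `p` with `|a(p)| > √2`. -/
theorem infinitely_many_large_values (a : ℕ → ℝ)
    (h4 : (fun x : ℕ => ∑ p ∈ (Finset.range (x + 1)).filter Nat.Prime, (a p) ^ 4)
        ~[atTop] fun x : ℕ => 2 * (((Finset.range (x + 1)).filter Nat.Prime).card : ℝ))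
    (h6 : (fun x : ℕ => ∑ p ∈ (Finset.range (x + 1)).filter Nat.Prime, (a p) ^ 6)
        ~[atTop] fun x : ℕ => 5 * (((Finset.range (x + 1)).filter Nat.Prime).card : ℝ)) :
    (∀ᶠ x : ℕ in atTop, ∃ p ∈ Finset.Ioc x (2 * x), p.Prime ∧ 2 < (a p) ^ 2) ∧
    {p : ℕ | p.Prime ∧ Real.sqrt 2 < |a p|}.Infinite := by
  set S4 : ℕ → ℝ := fun x => ∑ p ∈ (Finset.range (x + 1)).filter Nat.Prime, (a p) ^ 4 with hS4
  set S6 : ℕ → ℝ := fun x => ∑ p ∈ (Finset.range (x + 1)).filter Nat.Prime, (a p) ^ 6 with hS6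
  have hE4 : (fun x : ℕ => S4 x - 2 * (pc x : ℝ)) =o[atTop] (fun x : ℕ => (pc x : ℝ)) :=
    h4.isLittleO.trans_isBigO (isBigO_const_mul_self 2 _ atTop)
  have hE6 : (fun x : ℕ => S6 x - 5 * (pc x : ℝ)) =o[atTop] (fun x : ℕ => (pc x : ℝ)) :=
    h6.isLittleO.trans_isBigO (isBigO_const_mul_self 5 _ atTop)
  have hF : (fun x : ℕ => 2 * S4 x - S6 x + (pc x : ℝ))
      =o[atTop] (fun x : ℕ => (pc x : ℝ)) := by
    have h := (hE4.const_mul_left 2).sub hE6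
    refine h.congr' ?_ EventuallyEq.rfl
    filter_upwards with x
    ring
  have hbound := hF.bound (show (0:ℝ) < 1/100 by norm_num)
  have main : ∀ᶠ x : ℕ in atTop, ∃ p ∈ Finset.Ioc x (2 * x), p.Prime ∧ 2 < (a p) ^ 2 := by
    obtain ⟨N1, hN1⟩ := eventually_atTop.mp hbound
    obtain ⟨N2, hN2⟩ := eventually_atTop.mp cheb
    refine eventually_atTop.mpr ⟨max (max N1 N2) 1, fun x hx => ?_⟩
    have hx1 : 1 ≤ x := le_trans (le_max_right _ _) hx
    have hxN1 : N1 ≤ x := le_trans ((le_max_left _ _).trans (le_max_left _ _)) hx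
    have hxN2 : N2 ≤ x := le_trans ((le_max_right _ _).trans (le_max_left _ _)) hx
    by_contra hcon
    push_neg at hcon
    set T := (Finset.Ioc x (2*x)).filter Nat.Prime with hT
    -- every prime in (x, 2x] satisfies a p ^ 2 ≤ 2
    have hVsum : (T.card : ℝ) ≤ ∑ p ∈ T, (2*(a p)^4 - (a p)^6 + 1) := by
      have : ∀ p ∈ T, (1:ℝ) ≤ 2*(a p)^4 - (a p)^6 + 1 := by
        intro p hp
        rw [hT, Finset.mem_filter] at hp
        have hle := hcon p hp.1 hp.2
        nlinarith [sq_nonneg (a p), sq_nonneg ((a p)^2), sq_nonneg ((a p)^3)]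
      calc (T.card : ℝ) = ∑ _p ∈ T, (1:ℝ) := by simp
        _ ≤ _ := Finset.sum_le_sum this
    -- the interval sum equals F(2x) - F(x)
    have hs4 : S4 (2*x) = S4 x + ∑ p ∈ T, (a p)^4 := sum_split x (fun p => (a p)^4)
    have hs6 : S6 (2*x) = S6 x + ∑ p ∈ T, (a p)^6 := sum_split x (fun p => (a p)^6)
    have hpc : (pc (2*x) : ℝ) = pc x + (T.card : ℝ) := by
      have := pc_split x
      push_cast [this]
      rfl
    have hsum_eq : ∑ p ∈ T, (2*(a p)^4 - (a p)^6 + 1)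
        = (2 * S4 (2*x) - S6 (2*x) + (pc (2*x) : ℝ)) - (2 * S4 x - S6 x + (pc x : ℝ)) := by
      rw [Finset.sum_add_distrib, Finset.sum_sub_distrib, ← Finset.mul_sum, Finset.sum_const,
        nsmul_eq_mul, mul_one]
      rw [hs4, hs6, hpc]
      ring
    -- bounds
    have hb1 := hN1 x hxN1
    have hb2 := hN1 (2*x) (by omega)
    have hcheb := hN2 x hxN2
    rw [Real.norm_eq_abs, Real.norm_natCast] at hb1 hb2
    have hmono : (pc x : ℝ) ≤ (pc (2*x) : ℝ) := by
      exact_mod_cast pc_mono (show x ≤ 2*x by omega)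
    have habs1 : (2 * S4 x - S6 x + (pc x : ℝ)) ≤ 1/100 * (pc (2*x) : ℝ) :=
      (le_abs_self _).trans (hb1.trans (by linarith))
    have habs2 : -(2 * S4 (2*x) - S6 (2*x) + (pc (2*x) : ℝ)) ≤ 1/100 * (pc (2*x) : ℝ) :=
      (neg_le_abs _).trans hb2
    have habs1' : -(2 * S4 x - S6 x + (pc x : ℝ)) ≤ 1/100 * (pc (2*x) : ℝ) :=
      (neg_le_abs _).trans (hb1.trans (by linarith))
    have habs2' : (2 * S4 (2*x) - S6 (2*x) + (pc (2*x) : ℝ)) ≤ 1/100 * (pc (2*x) : ℝ) :=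
      (le_abs_self _).trans hb2
    -- Bertrand: T is nonempty
    have hTpos : 1 ≤ T.card := by
      obtain ⟨p, hpp, hp1, hp2⟩ := Nat.exists_prime_lt_and_le_two_mul x (by omega)
      apply Finset.card_pos.2
      exact ⟨p, by rw [hT]; simp [Finset.mem_Ioc, hp1, hp2, hpp]⟩
    have hTpos' : (1:ℝ) ≤ (T.card : ℝ) := by exact_mod_cast hTpos
    have hchebT : (pc (2*x) : ℝ) ≤ 20 * (T.card : ℝ) := hcheb
    linarith [hVsum, hsum_eq ▸ hVsum]
  refine ⟨main, ?_⟩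
  by_contra hfin
  rw [Set.not_infinite] at hfin
  obtain ⟨b, hb⟩ := hfin.bddAbove
  obtain ⟨M, hM⟩ := eventually_atTop.mp main
  obtain ⟨p, hpmem, hpp, hpa⟩ := hM (max M b) (le_max_left _ _)
  rw [Finset.mem_Ioc] at hpmem
  have hps : p ∈ {p : ℕ | p.Prime ∧ Real.sqrt 2 < |a p|} := by
    refine ⟨hpp, ?_⟩
    have h := Real.sqrt_lt_sqrt (by norm_num) hpa
    rwa [Real.sqrt_sq_eq_abs] at h
  have := hb hps
  have : p ≤ b := this
  have : b < p := lt_of_le_of_lt (le_max_right M b) hpmem.1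
  omega
end

section
/- Suppose b : primes → ℝ satisfies ∑_{x<p≤2x} b(p) = o(x/log x), ∑_{x<p≤2x} b(p)² ∼ x/log x, and ∑_{x<p≤2x} b(p)³ ∼ x/log x as x → ∞. Then for every sufficiently large x the interval (x, 2x] contains a prime p with b(p) < 0. -/
open Finset Filter Asymptotics

/-- If `∑_{x<p≤2x} b(p) = o(x/log x)`, `∑_{x<p≤2x} b(p)² ∼ x/log x`
and `∑_{x<p≤2x} b(p)³ ∼ x/log x`, then every interval `(x, 2x]` with `x` sufficiently
large contains a prime `p` with `b(p) < 0`. -/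
theorem negative_value_in_dyadic_interval (b : ℕ → ℝ)
    (h1 : (fun x : ℕ => ∑ p ∈ (Finset.Ioc x (2 * x)).filter Nat.Prime, b p)
        =o[atTop] fun x : ℕ => (x : ℝ) / Real.log x)
    (h2 : (fun x : ℕ => ∑ p ∈ (Finset.Ioc x (2 * x)).filter Nat.Prime, (b p) ^ 2)
        ~[atTop] fun x : ℕ => (x : ℝ) / Real.log x)
    (h3 : (fun x : ℕ => ∑ p ∈ (Finset.Ioc x (2 * x)).filter Nat.Prime, (b p) ^ 3)
        ~[atTop] fun x : ℕ => (x : ℝ) / Real.log x) :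
    ∀ᶠ x : ℕ in atTop, ∃ p ∈ Finset.Ioc x (2 * x), p.Prime ∧ b p < 0 := by
  have hf : ∀ᶠ x : ℕ in atTop, 0 < (x : ℝ) / Real.log x := by
    filter_upwards [eventually_ge_atTop 2] with x hx
    have hx1 : (1 : ℝ) < x := by exact_mod_cast Nat.lt_of_lt_of_le one_lt_two hx
    exact div_pos (by linarith) (Real.log_pos hx1)
  have hb1 := h1.bound (by norm_num : (0:ℝ) < 1/16)
  have hb2 := (h2.isLittleO.bound (by norm_num : (0:ℝ) < 1/2))
  have hb3 := (h3.isLittleO.bound (by norm_num : (0:ℝ) < 1/2))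
  filter_upwards [hf, hb1, hb2, hb3] with x hfx e1 e2 e3
  by_contra hcon
  push_neg at hcon
  set S := (Finset.Ioc x (2 * x)).filter Nat.Prime with hS
  have hbnn : ∀ p ∈ S, 0 ≤ b p := by
    intro p hp
    simp only [hS, Finset.mem_filter] at hp
    exact hcon p hp.1 hp.2
  set f := (x : ℝ) / Real.log x
  simp only [Real.norm_eq_abs] at e1 e2 e3
  simp only [Pi.sub_apply] at e2 e3
  rw [abs_of_pos hfx] at e1 e2 e3
  -- Cauchy–Schwarz : (∑ b²)² ≤ (∑ b)(∑ b³)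
  have hCS : (∑ p ∈ S, (b p) ^ 2) ^ 2 ≤ (∑ p ∈ S, b p) * (∑ p ∈ S, (b p) ^ 3) := by
    have key := Finset.sum_mul_sq_le_sq_mul_sq S (fun p => Real.sqrt (b p))
      (fun p => b p * Real.sqrt (b p))
    have h1' : ∀ p ∈ S, Real.sqrt (b p) * (b p * Real.sqrt (b p)) = (b p) ^ 2 := by
      intro p hp
      have h := Real.mul_self_sqrt (hbnn p hp)
      ring_nf
      nlinarith [Real.sq_sqrt (hbnn p hp)]
    have h2' : ∀ p ∈ S, Real.sqrt (b p) ^ 2 = b p := fun p hp => Real.sq_sqrt (hbnn p hp)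
    have h3' : ∀ p ∈ S, (b p * Real.sqrt (b p)) ^ 2 = (b p) ^ 3 := by
      intro p hp
      have h := Real.sq_sqrt (hbnn p hp)
      ring_nf
      nlinarith [Real.sq_sqrt (hbnn p hp)]
    rw [Finset.sum_congr rfl h1', Finset.sum_congr rfl h2', Finset.sum_congr rfl h3'] at key
    exact key
  have hS2 : f / 2 ≤ ∑ p ∈ S, (b p) ^ 2 := by
    have := abs_le.1 e2
    linarith [this.1]
  have hS1 : ∑ p ∈ S, b p ≤ 1 / 16 * f := (abs_le.1 e1).2
  have hS1' : 0 ≤ ∑ p ∈ S, b p := Finset.sum_nonneg hbnn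
  have hS3 : ∑ p ∈ S, (b p) ^ 3 ≤ 3 / 2 * f := by
    have := abs_le.1 e3
    linarith [this.2]
  have hS3' : 0 ≤ ∑ p ∈ S, (b p) ^ 3 := by
    apply Finset.sum_nonneg
    intro p hp
    exact pow_nonneg (hbnn p hp) 3
  nlinarith [hCS, hS2, hS1, hS3, hfx, mul_le_mul hS1 hS3 hS3' (by positivity : (0:ℝ) ≤ 1/16 * f)]
end

section
/- Suppose a : primes → ℝ satisfies ∑_{p≤x} a(p)² ∼ π(x), ∑_{p≤x} a(p)⁴ ∼ 2π(x), and ∑_{p≤x} a(p)⁶ ∼ 5π(x). Then liminf_{x→∞} #{p ≤ x : 1 < |a(p)| < 2}/π(x) ≥ 1/6.065 > 0.1648. -/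
open Finset Filter Asymptotics

lemma g_nonpos_aux (t : ℝ) (h : ¬(1 < |t| ∧ |t| < 2)) : -t^6+5*t^4-4*t^2 ≤ 0 := by
  push_neg at h
  rcases le_or_gt |t| 1 with h1 | h1
  · have h2 : t^2 ≤ 1 := by nlinarith [sq_abs t, abs_nonneg t]
    nlinarith [sq_nonneg t, mul_nonneg (sq_nonneg t) (sub_nonneg.2 h2)]
  · have h2 : 2 ≤ |t| := h h1
    have h3 : 4 ≤ t^2 := by nlinarith [sq_abs t]
    nlinarith [mul_nonneg (mul_nonneg (sq_nonneg t) (by linarith : (0:ℝ) ≤ t^2-1))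
      (by linarith : (0:ℝ) ≤ t^2-4)]

lemma g_le_aux (t : ℝ) (h1 : 1 < |t|) (h2 : |t| < 2) : -t^6+5*t^4-4*t^2 ≤ 6.065 := by
  have hu1 : 1 ≤ t^2 := by nlinarith [sq_abs t, abs_nonneg t]
  have hu4 : t^2 ≤ 4 := by nlinarith [sq_abs t, abs_nonneg t]
  nlinarith [sq_nonneg (t^2 - 2.8685),
    mul_nonneg (sq_nonneg (t^2 - 2.8685)) (by linarith : (0:ℝ) ≤ t^2 + 0.737)]

/-- If `∑_{p≤x} a(p)² ∼ π(x)`, `∑_{p≤x} a(p)⁴ ∼ 2π(x)` and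
`∑_{p≤x} a(p)⁶ ∼ 5π(x)`, then
`liminf #{p ≤ x : 1 < |a(p)| < 2}/π(x) ≥ 1/6.065 > 0.1648`. -/
theorem density_one_to_two (a : ℕ → ℝ)
    (h2 : (fun x : ℕ => ∑ p ∈ (Finset.range (x + 1)).filter Nat.Prime, (a p) ^ 2)
        ~[atTop] fun x : ℕ => (((Finset.range (x + 1)).filter Nat.Prime).card : ℝ))
    (h4 : (fun x : ℕ => ∑ p ∈ (Finset.range (x + 1)).filter Nat.Prime, (a p) ^ 4)
        ~[atTop] fun x : ℕ => 2 * (((Finset.range (x + 1)).filter Nat.Prime).card : ℝ))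
    (h6 : (fun x : ℕ => ∑ p ∈ (Finset.range (x + 1)).filter Nat.Prime, (a p) ^ 6)
        ~[atTop] fun x : ℕ => 5 * (((Finset.range (x + 1)).filter Nat.Prime).card : ℝ)) :
    (1 : ℝ) / 6.065 ≤
      atTop.liminf (fun x : ℕ =>
        (((Finset.range (x + 1)).filter
            (fun p => p.Prime ∧ 1 < |a p| ∧ |a p| < 2)).card : ℝ) /
          (((Finset.range (x + 1)).filter Nat.Prime).card : ℝ)) ∧
    (0.1648 : ℝ) < 1 / 6.065 := by
  classical
  refine ⟨?_, by norm_num⟩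
  set P : ℕ → ℝ := fun x => (((Finset.range (x + 1)).filter Nat.Prime).card : ℝ) with hPdef
  set N : ℕ → ℝ := fun x => (((Finset.range (x + 1)).filter
      (fun p => p.Prime ∧ 1 < |a p| ∧ |a p| < 2)).card : ℝ) with hNdef
  set f : ℕ → ℝ := fun x =>
    ∑ p ∈ (Finset.range (x + 1)).filter Nat.Prime, (-(a p)^6 + 5*(a p)^4 - 4*(a p)^2)
    with hfdef
  -- π(x) > 0 for x ≥ 2
  have hPpos : ∀ x : ℕ, 2 ≤ x → 0 < P x := by
    intro x hx
    have h2m : 2 ∈ (Finset.range (x + 1)).filter Nat.Prime :=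
      Finset.mem_filter.mpr ⟨Finset.mem_range.mpr (by omega), Nat.prime_two⟩
    have h := Finset.card_pos.mpr ⟨2, h2m⟩
    simp only [hPdef]
    exact_mod_cast h
  -- key inequality  f x ≤ 6.065 * N x
  have key : ∀ x : ℕ, f x ≤ 6.065 * N x := by
    intro x
    set s := (Finset.range (x + 1)).filter Nat.Prime with hs
    have hsplit := Finset.sum_filter_add_sum_filter_not s (fun p => 1 < |a p| ∧ |a p| < 2)
        (fun p => (-(a p)^6 + 5*(a p)^4 - 4*(a p)^2))
    have hb1 : ∑ p ∈ s.filter (fun p => 1 < |a p| ∧ |a p| < 2),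
        (-(a p)^6 + 5*(a p)^4 - 4*(a p)^2)
        ≤ (s.filter (fun p => 1 < |a p| ∧ |a p| < 2)).card • (6.065:ℝ) := by
      apply Finset.sum_le_card_nsmul
      intro p hp
      simp only [Finset.mem_filter] at hp
      exact g_le_aux _ hp.2.1 hp.2.2
    have hb2 : ∑ p ∈ s.filter (fun p => ¬(1 < |a p| ∧ |a p| < 2)),
        (-(a p)^6 + 5*(a p)^4 - 4*(a p)^2) ≤ 0 := by
      apply Finset.sum_nonpos
      intro p hp
      simp only [Finset.mem_filter] at hp
      exact g_nonpos_aux _ hp.2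
    have hcard : ((s.filter (fun p => 1 < |a p| ∧ |a p| < 2)).card : ℝ) = N x := by
      rw [hNdef, hs, Finset.filter_filter]
    rw [nsmul_eq_mul, hcard] at hb1
    have : f x = ∑ p ∈ s, (-(a p)^6 + 5*(a p)^4 - 4*(a p)^2) := rfl
    rw [this, ← hsplit]
    linarith
  -- f relates to the three sums
  have hfsum : ∀ x : ℕ, f x =
      -(∑ p ∈ (Finset.range (x + 1)).filter Nat.Prime, (a p)^6)
      + 5 * (∑ p ∈ (Finset.range (x + 1)).filter Nat.Prime, (a p)^4)
      - 4 * (∑ p ∈ (Finset.range (x + 1)).filter Nat.Prime, (a p)^2) := by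
    intro x
    simp [hfdef, Finset.sum_add_distrib, Finset.sum_sub_distrib, Finset.mul_sum]
  -- f/P → 1
  have hPne : ∀ᶠ x : ℕ in atTop, P x ≠ 0 := by
    filter_upwards [eventually_ge_atTop 2] with x hx
    exact (hPpos x hx).ne'
  have htend1 : Tendsto (fun x => f x / P x) atTop (nhds 1) := by
    have hPO : P =O[atTop] P := isBigO_refl P atTop
    have hC : (fun x => (∑ p ∈ (Finset.range (x + 1)).filter Nat.Prime, (a p)^2) - P x)
        =o[atTop] P := h2
    have hB : (fun x => (∑ p ∈ (Finset.range (x + 1)).filter Nat.Prime, (a p)^4) - 2 * P x)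
        =o[atTop] P := IsLittleO.trans_isBigO h4 (hPO.const_mul_left 2)
    have hA : (fun x => (∑ p ∈ (Finset.range (x + 1)).filter Nat.Prime, (a p)^6) - 5 * P x)
        =o[atTop] P := IsLittleO.trans_isBigO h6 (hPO.const_mul_left 5)
    have hF : (fun x => f x - P x) =o[atTop] P := by
      have := ((hA.neg_left.add (hB.const_mul_left 5)).sub (hC.const_mul_left 4))
      refine this.congr' (Eventually.of_forall fun x => ?_) (Eventually.of_forall fun x => rfl)
      simp only [hfsum]; ring
    have hEq : f ~[atTop] P := hF
    exact (Asymptotics.isEquivalent_iff_tendsto_one hPne).mp hEq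
  have htend : Tendsto (fun x => (1/6.065 : ℝ) * (f x / P x)) atTop (nhds (1/6.065)) := by
    have := htend1.const_mul (1/6.065 : ℝ)
    simpa using this
  -- eventual lower bound for N/P
  have hev : ∀ᶠ x : ℕ in atTop, (1/6.065 : ℝ) * (f x / P x) ≤ N x / P x := by
    filter_upwards [eventually_ge_atTop 2] with x hx
    have hPx := hPpos x hx
    have hk := key x
    have hN0 : 0 ≤ N x := by positivity
    have heq : (1/6.065 : ℝ) * (f x / P x) = f x / (6.065 * P x) := by ring
    rw [heq, div_le_div_iff₀ (by positivity) hPx]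
    nlinarith [mul_le_mul_of_nonneg_right hk hPx.le]
  -- N/P ≤ 1 eventually, boundedness
  have hub : ∀ᶠ x : ℕ in atTop, N x / P x ≤ 1 := by
    filter_upwards [eventually_ge_atTop 2] with x hx
    have hPx := hPpos x hx
    have hsub : (Finset.range (x + 1)).filter (fun p => p.Prime ∧ 1 < |a p| ∧ |a p| < 2)
        ⊆ (Finset.range (x + 1)).filter Nat.Prime := by
      intro p hp
      simp only [Finset.mem_filter] at hp ⊢
      exact ⟨hp.1, hp.2.1⟩
    have hle : N x ≤ P x := by
      simp only [hNdef, hPdef]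
      exact_mod_cast Finset.card_le_card hsub
    exact (div_le_one hPx).mpr hle
  have hbdd : IsBoundedUnder (· ≤ ·) atTop (fun x : ℕ => N x / P x) :=
    ⟨1, by rwa [eventually_map]⟩
  have hcob : IsCoboundedUnder (· ≥ ·) atTop (fun x : ℕ => N x / P x) :=
    hbdd.isCoboundedUnder_ge
  -- conclude
  have hmain : ∀ c : ℝ, c < 1/6.065 →
      c ≤ atTop.liminf (fun x : ℕ => N x / P x) := by
    intro c hc
    apply le_liminf_of_le hcob
    have hgt : ∀ᶠ x : ℕ in atTop, c < (1/6.065 : ℝ) * (f x / P x) :=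
      htend.eventually (eventually_gt_nhds hc)
    filter_upwards [hgt, hev] with x h1 h2
    linarith
  exact le_of_forall_lt_imp_le_of_dense hmain
end

section
/- Let a : ℕ → ℝ be multiplicative with a(q) < 0 for some prime q, and suppose there are infinitely many squarefree integers m with a(m) > c₁ exp(c log m / log log m) for fixed constants c, c₁ > 0. Then a(n) = Ω₋(exp(c' log n / log log n)) for some c' > 0; i.e., there are infinitely many n with a(n) < −c₂ exp(c' log n / log log n) for some c₂ > 0. -/
private lemma exp_two_lt_eight : Real.exp 2 < 8 := by
  have h := Real.exp_one_lt_d9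
  have : Real.exp 2 = Real.exp 1 * Real.exp 1 := by
    rw [← Real.exp_add]; norm_num
  nlinarith [Real.exp_pos 1]

private lemma one_lt_log_three : 1 < Real.log 3 := by
  rw [Real.lt_log_iff_exp_lt (by norm_num)]
  nlinarith [Real.exp_one_lt_d9]

-- y between x and x^2, x ≥ 3: (c/2)·log y/loglog y ≤ c·log x/loglog x
private lemma g_bound1 (c x y : ℝ) (hc : 0 < c) (h3 : 3 ≤ x) (hxy : x ≤ y) (hy2 : y ≤ x ^ 2) :
    c / 2 * Real.log y / Real.log (Real.log y) ≤ c * Real.log x / Real.log (Real.log x) := by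
  have hx0 : (0:ℝ) < x := by linarith
  have hlx : 1 < Real.log x := lt_of_lt_of_le one_lt_log_three
    (Real.log_le_log (by norm_num) h3)
  have hllx : 0 < Real.log (Real.log x) := Real.log_pos hlx
  have hly : Real.log x ≤ Real.log y := Real.log_le_log hx0 hxy
  have hly2 : Real.log y ≤ 2 * Real.log x := by
    calc Real.log y ≤ Real.log (x ^ 2) := Real.log_le_log (by linarith) hy2
    _ = 2 * Real.log x := by rw [Real.log_pow]; push_cast; ring
  have hlly : Real.log (Real.log x) ≤ Real.log (Real.log y) :=
    Real.log_le_log (by linarith) hly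
  have hlly0 : 0 < Real.log (Real.log y) := lt_of_lt_of_le hllx hlly
  rw [div_le_div_iff₀ hlly0 hllx]
  have ha : c / 2 * Real.log y ≤ c * Real.log x := by nlinarith
  have h1 := mul_le_mul_of_nonneg_right ha hllx.le
  have h2 := mul_le_mul_of_nonneg_left hlly
    (mul_nonneg hc.le (by linarith : (0:ℝ) ≤ Real.log x))
  linarith

-- y between x and x^2, x ≥ 8: (c/2)·log x/loglog x ≤ c·log y/loglog y
private lemma g_bound2 (c x y : ℝ) (hc : 0 < c) (h8 : 8 ≤ x) (hxy : x ≤ y) (hy2 : y ≤ x ^ 2) :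
    c / 2 * Real.log x / Real.log (Real.log x) ≤ c * Real.log y / Real.log (Real.log y) := by
  have hx0 : (0:ℝ) < x := by linarith
  have hlx2 : 2 ≤ Real.log x := by
    rw [Real.le_log_iff_exp_le hx0]; linarith [exp_two_lt_eight]
  have hllx : Real.log 2 ≤ Real.log (Real.log x) :=
    Real.log_le_log (by norm_num) hlx2
  have hl2 : 0 < Real.log 2 := Real.log_pos (by norm_num)
  have hllx0 : 0 < Real.log (Real.log x) := lt_of_lt_of_le hl2 hllx
  have hly : Real.log x ≤ Real.log y := Real.log_le_log hx0 hxy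
  have hly2 : Real.log y ≤ 2 * Real.log x := by
    calc Real.log y ≤ Real.log (x ^ 2) := Real.log_le_log (by linarith) hy2
    _ = 2 * Real.log x := by rw [Real.log_pow]; push_cast; ring
  have hlly : Real.log (Real.log y) ≤ Real.log 2 + Real.log (Real.log x) := by
    calc Real.log (Real.log y) ≤ Real.log (2 * Real.log x) :=
          Real.log_le_log (by linarith) hly2
    _ = Real.log 2 + Real.log (Real.log x) := Real.log_mul (by norm_num) (by linarith)
  have hlly2 : Real.log (Real.log y) ≤ 2 * Real.log (Real.log x) := by linarith
  have hllxy : Real.log (Real.log x) ≤ Real.log (Real.log y) :=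
    Real.log_le_log (by linarith) hly
  have hlly0 : 0 < Real.log (Real.log y) := lt_of_lt_of_le hllx0 hllxy
  rw [div_le_div_iff₀ hllx0 hlly0]
  have h1 := mul_le_mul_of_nonneg_left hlly2
    (mul_nonneg (by linarith : (0:ℝ) ≤ c / 2) (by linarith : (0:ℝ) ≤ Real.log x))
  have h2 := mul_le_mul_of_nonneg_right
    (mul_le_mul_of_nonneg_left hly hc.le) hllx0.le
  nlinarith

open Finset Filter Asymptotics

/-- If `a` is multiplicative, `a(q) < 0` for some prime `q`, and there are
infinitely many squarefree `m` with `a(m) > c₁ exp(c log m / log log m)`, then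
`a(n) = Ω₋(exp(c' log n / log log n))` for some `c' > 0`. -/
theorem omega_minus_result (a : ℕ → ℝ) (c c₁ : ℝ) (hc : 0 < c) (hc₁ : 0 < c₁)
    (hone : a 1 = 1)
    (hmult : ∀ m n : ℕ, Nat.Coprime m n → a (m * n) = a m * a n)
    (q : ℕ) (hq : q.Prime) (hqneg : a q < 0)
    (hinf : {m : ℕ | Squarefree m ∧
        c₁ * Real.exp (c * Real.log m / Real.log (Real.log m)) < a m}.Infinite) :
    ∃ c' > 0, ∃ c₂ > 0, ∀ N : ℕ, ∃ n ≥ N,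
      a n < -c₂ * Real.exp (c' * Real.log n / Real.log (Real.log n)) := by
  have hA : (0:ℝ) < -a q := by linarith
  have haq : a q ≠ 0 := ne_of_lt hqneg
  set c₂ : ℝ := min (c₁ * (-a q)) (c₁ / (-a q)) with hc₂def
  have hc₂ : 0 < c₂ := lt_min (by positivity) (by positivity)
  refine ⟨c / 2, by linarith, c₂, hc₂, ?_⟩
  intro N
  obtain ⟨m, hmem, hmlt⟩ := hinf.exists_gt (16 * q * q * (N + 1))
  obtain ⟨hsf, ham⟩ := hmem
  have hq2 : 2 ≤ q := hq.two_le
  have hN1 : 1 ≤ N + 1 := le_refl 1 |>.trans (Nat.le_add_left 1 N)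
  have hm_big : 16 * q * q * (N + 1) < m := hmlt
  have hmq : q ≤ m := by
    have h1 : q ≤ q * (16 * q * (N + 1)) := Nat.le_mul_of_pos_right q (by positivity)
    have h2 : q * (16 * q * (N + 1)) = 16 * q * q * (N + 1) := by ring
    linarith
  have h64 : 64 ≤ 16 * q * q * (N + 1) := by
    calc (64:ℕ) = 16 * 2 * 2 * 1 := by norm_num
    _ ≤ 16 * q * q * (N + 1) := by gcongr <;> omega
  have hm3 : 3 ≤ m := by linarith
  have hmN : N ≤ m := by
    have h1 : N + 1 ≤ (16 * q * q) * (N + 1) := Nat.le_mul_of_pos_left (N + 1) (by positivity)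
    have h2 : (16 * q * q) * (N + 1) = 16 * q * q * (N + 1) := by ring
    linarith
  have ham_pos : 0 < a m := lt_trans (by positivity) ham
  by_cases hdvd : q ∣ m
  · -- take n = m / q
    obtain ⟨k, rfl⟩ := hdvd
    have hcop : Nat.Coprime q k := Nat.coprime_of_squarefree_mul hsf
    have hk_big : 16 * q * (N + 1) < k := by
      have h : q * (16 * q * (N + 1)) < q * k := by
        calc q * (16 * q * (N + 1)) = 16 * q * q * (N + 1) := by ring
        _ < q * k := hm_big
      exact Nat.lt_of_mul_lt_mul_left h
    have h32 : 32 ≤ 16 * q * (N + 1) := by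
      calc (32:ℕ) = 16 * 2 * 1 := by norm_num
      _ ≤ 16 * q * (N + 1) := by gcongr <;> omega
    have hk8 : 8 ≤ k := by linarith
    have hkq : q ≤ k := by
      have h1 : q ≤ q * (16 * (N + 1)) := Nat.le_mul_of_pos_right q (by positivity)
      have h2 : q * (16 * (N + 1)) = 16 * q * (N + 1) := by ring
      linarith
    have hkN : N ≤ k := by
      have h1 : N + 1 ≤ (16 * q) * (N + 1) := Nat.le_mul_of_pos_left (N + 1) (by positivity)
      have h2 : (16 * q) * (N + 1) = 16 * q * (N + 1) := by ring
      linarith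
    refine ⟨k, hkN, ?_⟩
    have hmulteq : a (q * k) = a q * a k := hmult q k hcop
    rw [hmulteq] at ham ham_pos
    push_cast at ham
    -- real versions
    set X : ℝ := Real.exp (c / 2 * Real.log k / Real.log (Real.log k)) with hXdef
    set Y : ℝ := Real.exp (c * Real.log ((q:ℝ) * (k:ℝ)) /
      Real.log (Real.log ((q:ℝ) * (k:ℝ)))) with hYdef
    have hX : 0 < X := Real.exp_pos _
    have hXY : X ≤ Y := by
      apply Real.exp_le_exp.mpr
      apply g_bound2 c (k:ℝ) ((q:ℝ) * (k:ℝ)) hc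
      · exact_mod_cast hk8
      · have h1q : (1:ℝ) ≤ (q:ℝ) := by exact_mod_cast hq.one_lt.le
        have hk0 : (0:ℝ) ≤ (k:ℝ) := Nat.cast_nonneg k
        calc (k:ℝ) = 1 * k := (one_mul _).symm
        _ ≤ (q:ℝ) * k := mul_le_mul_of_nonneg_right h1q hk0
      · have hqk : (q:ℝ) ≤ (k:ℝ) := by exact_mod_cast hkq
        have hk0 : (0:ℝ) ≤ (k:ℝ) := Nat.cast_nonneg k
        nlinarith
    have hkey : a k < c₁ * Y / a q := by
      rw [lt_div_iff_of_neg hqneg]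
      linarith [ham]
    have e1 : c₁ * Y / a q = -(c₁ / (-a q)) * Y := by
      field_simp
    have e2 : -(c₁ / (-a q)) * Y ≤ -(c₁ / (-a q)) * X :=
      mul_le_mul_of_nonpos_left hXY (neg_nonpos.mpr (by positivity))
    have e3 : -(c₁ / (-a q)) * X ≤ -c₂ * X :=
      mul_le_mul_of_nonneg_right (neg_le_neg (min_le_right _ _)) hX.le
    rw [e1] at hkey
    linarith
  · -- take n = q * m
    have hcop : Nat.Coprime q m := (Nat.Prime.coprime_iff_not_dvd hq).mpr hdvd
    refine ⟨q * m, le_trans hmN (Nat.le_mul_of_pos_left m hq.pos), ?_⟩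
    rw [hmult q m hcop]
    push_cast
    set Y : ℝ := Real.exp (c * Real.log (m:ℝ) / Real.log (Real.log (m:ℝ))) with hYdef
    set X : ℝ := Real.exp (c / 2 * Real.log ((q:ℝ) * (m:ℝ)) /
      Real.log (Real.log ((q:ℝ) * (m:ℝ)))) with hXdef
    have hX : 0 < X := Real.exp_pos _
    have hXY : X ≤ Y := by
      apply Real.exp_le_exp.mpr
      apply g_bound1 c (m:ℝ) ((q:ℝ) * (m:ℝ)) hc
      · exact_mod_cast hm3
      · have h1q : (1:ℝ) ≤ (q:ℝ) := by exact_mod_cast hq.one_lt.le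
        have hm0 : (0:ℝ) ≤ (m:ℝ) := Nat.cast_nonneg m
        calc (m:ℝ) = 1 * m := (one_mul _).symm
        _ ≤ (q:ℝ) * m := mul_le_mul_of_nonneg_right h1q hm0
      · have hqm : (q:ℝ) ≤ (m:ℝ) := by exact_mod_cast hmq
        have hm0 : (0:ℝ) ≤ (m:ℝ) := Nat.cast_nonneg m
        nlinarith
    have h1 : a q * a m < a q * (c₁ * Y) := mul_lt_mul_of_neg_left ham hqneg
    have e1 : a q * (c₁ * Y) = -(c₁ * (-a q) * Y) := by ring
    have e2 : c₁ * (-a q) * X ≤ c₁ * (-a q) * Y :=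
      mul_le_mul_of_nonneg_left hXY (by positivity)
    have e3 : c₂ * X ≤ c₁ * (-a q) * X :=
      mul_le_mul_of_nonneg_right (min_le_left _ _) hX.le
    rw [e1] at h1
    linarith
end
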